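/- Let F ∈ (0,1] and ν, ν' > 0. For every ξ ∈ ℝ³ with ξ ≠ 0, (|ξ|²/|ξ|_F²)(ν ξ₁² + ν ξ₂² + ν' F² ξ₃²) = ν ξ₁² + ν ξ₂² + ((1 − F²)ν + F²ν') ξ₃² − (ν − ν') F² (1 − F²) · ξ₃⁴ / |ξ|_F². (At the level of Fourier symbols, this is the decomposition Γ = Γ_L + (ν − ν')F²(1 − F²)Λ² of the quasi-geostrophic diffusion operator into a constant-coefficient local second-order operator Γ_L = ν∂₁² + ν∂₂² + ((1−F²)ν + F²ν')∂₃² and the square of the non-local operator Λ = ∂₃²(−Δ_F)^{−1/2}.) -/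

import Mathlib

noncomputable section

/-- Symbol-level decomposition `Γ = Γ_L + (ν − ν')F²(1 − F²)Λ²` of the quasi-geostrophic
diffusion operator: for `ξ ≠ 0`,
`(|ξ|²/|ξ|_F²)(νξ₁² + νξ₂² + ν'F²ξ₃²)
  = νξ₁² + νξ₂² + ((1−F²)ν + F²ν')ξ₃² − (ν−ν')F²(1−F²) ξ₃⁴/|ξ|_F²`. -/
theorem gamma_symbol_decomposition
    (F : ℝ) (hF : F ∈ Set.Ioc (0 : ℝ) 1)
    (ν ν' : ℝ) (hν : 0 < ν) (hν' : 0 < ν')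
    (ξ : EuclideanSpace ℝ (Fin 3)) (hξ : ξ ≠ 0) :
    (‖ξ‖ ^ 2 / (ξ 0 ^ 2 + ξ 1 ^ 2 + F ^ 2 * ξ 2 ^ 2)) *
        (ν * ξ 0 ^ 2 + ν * ξ 1 ^ 2 + ν' * F ^ 2 * ξ 2 ^ 2) =
      ν * ξ 0 ^ 2 + ν * ξ 1 ^ 2 + ((1 - F ^ 2) * ν + F ^ 2 * ν') * ξ 2 ^ 2 -
        (ν - ν') * F ^ 2 * (1 - F ^ 2) * ξ 2 ^ 4 /
          (ξ 0 ^ 2 + ξ 1 ^ 2 + F ^ 2 * ξ 2 ^ 2) := by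
  have hn : ‖ξ‖ ^ 2 = ξ 0 ^ 2 + ξ 1 ^ 2 + ξ 2 ^ 2 := by
    rw [EuclideanSpace.norm_eq, Real.sq_sqrt (by positivity)]
    simp [Fin.sum_univ_three, sq_abs]
  have hF0 : (0 : ℝ) < F := hF.1
  have hD : ξ 0 ^ 2 + ξ 1 ^ 2 + F ^ 2 * ξ 2 ^ 2 ≠ 0 := by
    intro h
    have h0 : ξ 0 = 0 ∧ ξ 1 = 0 ∧ ξ 2 = 0 := by
      constructor
      · nlinarith [sq_nonneg (ξ 0), sq_nonneg (ξ 1), sq_nonneg (ξ 2), sq_nonneg F,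
          mul_nonneg (sq_nonneg F) (sq_nonneg (ξ 2))]
      constructor
      · nlinarith [sq_nonneg (ξ 0), sq_nonneg (ξ 1),
          mul_nonneg (sq_nonneg F) (sq_nonneg (ξ 2))]
      · have h2 : F ^ 2 * ξ 2 ^ 2 = 0 := by
          nlinarith [sq_nonneg (ξ 0), sq_nonneg (ξ 1),
            mul_nonneg (sq_nonneg F) (sq_nonneg (ξ 2))]
        have h3 : ξ 2 ^ 2 = 0 :=
          (mul_eq_zero.mp h2).resolve_left (by positivity)
        exact pow_eq_zero_iff (by norm_num) |>.mp h3
    apply hξ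
    ext i
    fin_cases i <;> simp [h0.1, h0.2.1, h0.2.2]
  rw [hn]
  rw [div_mul_eq_mul_div, eq_sub_iff_add_eq, ← add_div, div_eq_iff hD]
  ring
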